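/- Let H be an m×n real matrix, Q an m×m symmetric positive definite real matrix, Σ̄ and Σ_O n×n symmetric positive definite real matrices, and let z, ĥ ∈ ℝᵐ and μ̄, μ_O ∈ ℝⁿ. Define the quadratic cost J(x) = (1/2)(z − ĥ − H(x−μ̄))ᵀ Q^(−1) (z − ĥ − H(x−μ̄)) + (1/2)(x−μ_O)ᵀ Σ_O^(−1) (x−μ_O) + (1/2)(x−μ̄)ᵀ Σ̄^(−1) (x−μ̄), and set Σ = (HᵀQ^(−1)H + Σ_O^(−1) + Σ̄^(−1))^(−1). Then the vector μ = μ̄ + Σ·Hᵀ·Q^(−1)·(z − ĥ) + Σ·Σ_O^(−1)·(μ_O − μ̄) is the unique global minimizer of J on ℝⁿ: J(μ) ≤ J(x) for all x, with equality only when x = μ. -/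

import Mathlib

open Matrix

lemma mulVec_dot' {m n : ℕ} (H : Matrix (Fin m) (Fin n) ℝ) (d : Fin n → ℝ) (y : Fin m → ℝ) :
    (H *ᵥ d) ⬝ᵥ y = d ⬝ᵥ (Hᵀ *ᵥ y) := by
  rw [dotProduct_comm, dotProduct_mulVec, ← mulVec_transpose, dotProduct_comm]

lemma quad_expand' {n : ℕ} (S : Matrix (Fin n) (Fin n) ℝ) (hS : Sᵀ = S) (p d : Fin n → ℝ) :
    (p + d) ⬝ᵥ (S *ᵥ (p + d)) =
      p ⬝ᵥ (S *ᵥ p) + 2 * (d ⬝ᵥ (S *ᵥ p)) + d ⬝ᵥ (S *ᵥ d) := by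
  have h : p ⬝ᵥ (S *ᵥ d) = d ⬝ᵥ (S *ᵥ p) := by
    rw [dotProduct_mulVec, ← mulVec_transpose, hS, dotProduct_comm]
  simp [mulVec_add, dotProduct_add, add_dotProduct, h]
  ring

/-- The object-uncertainty-aware posterior mean
`μ = μ̄ + Σ Hᵀ Q⁻¹ (z − ĥ) + Σ Σ_O⁻¹ (μ_O − μ̄)`, with
`Σ = (Hᵀ Q⁻¹ H + Σ_O⁻¹ + Σ̄⁻¹)⁻¹`, is the unique global minimizer of the
Gaussian negative log-posterior
`J(x) = ½(z−ĥ−H(x−μ̄))ᵀQ⁻¹(z−ĥ−H(x−μ̄)) + ½(x−μ_O)ᵀΣ_O⁻¹(x−μ_O)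
      + ½(x−μ̄)ᵀΣ̄⁻¹(x−μ̄)`. -/
theorem posterior_mean_minimizes_cost {m n : ℕ}
    (H : Matrix (Fin m) (Fin n) ℝ) (Q : Matrix (Fin m) (Fin m) ℝ)
    (Sb SO : Matrix (Fin n) (Fin n) ℝ)
    (hQ : Q.PosDef) (hSb : Sb.PosDef) (hSO : SO.PosDef)
    (z hhat : Fin m → ℝ) (mub muO : Fin n → ℝ) :
    let J : (Fin n → ℝ) → ℝ := fun x =>
      (1 / 2) * ((z - hhat - H *ᵥ (x - mub)) ⬝ᵥ (Q⁻¹ *ᵥ (z - hhat - H *ᵥ (x - mub)))) +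
      (1 / 2) * ((x - muO) ⬝ᵥ (SO⁻¹ *ᵥ (x - muO))) +
      (1 / 2) * ((x - mub) ⬝ᵥ (Sb⁻¹ *ᵥ (x - mub)))
    let Spost : Matrix (Fin n) (Fin n) ℝ := (Hᵀ * Q⁻¹ * H + SO⁻¹ + Sb⁻¹)⁻¹
    let μ : Fin n → ℝ :=
      mub + (Spost * Hᵀ * Q⁻¹) *ᵥ (z - hhat) + (Spost * SO⁻¹) *ᵥ (muO - mub)
    (∀ x : Fin n → ℝ, J μ ≤ J x) ∧ (∀ x : Fin n → ℝ, J x = J μ → x = μ) := by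
  intro J Spost μ
  -- basic posdef / symmetry facts
  have hQi : Q⁻¹.PosDef := hQ.inv
  have hSOi : SO⁻¹.PosDef := hSO.inv
  have hSbi : Sb⁻¹.PosDef := hSb.inv
  have hsym : ∀ {k : ℕ} {M : Matrix (Fin k) (Fin k) ℝ}, M.PosDef → Mᵀ = M := by
    intro k M hM
    have := hM.isHermitian
    rwa [IsHermitian, conjTranspose_eq_transpose_of_trivial] at this
  set A : Matrix (Fin n) (Fin n) ℝ := Hᵀ * Q⁻¹ * H + SO⁻¹ + Sb⁻¹ with hA_def
  have hA : A.PosDef := by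
    have hsemi : (Hᵀ * Q⁻¹ * H).PosSemidef := by
      have := hQi.posSemidef.conjTranspose_mul_mul_same H
      rwa [conjTranspose_eq_transpose_of_trivial] at this
    exact (Matrix.PosDef.posSemidef_add hsemi hSOi).add hSbi
  have hAsym : Aᵀ = A := hsym hA
  obtain ⟨v, hv⟩ : ∃ v : Fin m → ℝ, v = z - hhat := ⟨_, rfl⟩
  obtain ⟨w, hw⟩ : ∃ w : Fin n → ℝ, w = muO - mub := ⟨_, rfl⟩
  obtain ⟨e, he⟩ : ∃ e : Fin n → ℝ, e = μ - mub := ⟨_, rfl⟩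
  -- stationarity
  have he2 : (Spost * Hᵀ * Q⁻¹) *ᵥ v + (Spost * SO⁻¹) *ᵥ w
      = Spost *ᵥ (Hᵀ *ᵥ (Q⁻¹ *ᵥ v) + SO⁻¹ *ᵥ w) := by
    simp only [mulVec_add, mulVec_mulVec, Matrix.mul_assoc]
  have he3 : e = (Spost * Hᵀ * Q⁻¹) *ᵥ v + (Spost * SO⁻¹) *ᵥ w := by
    simp only [he, μ, hv, hw]; abel
  have hstat : A *ᵥ e = Hᵀ *ᵥ (Q⁻¹ *ᵥ v) + SO⁻¹ *ᵥ w := by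
    rw [he3, he2, mulVec_mulVec]
    have : A * Spost = 1 := by
      rw [hA_def]
      exact Matrix.mul_nonsing_inv _ (isUnit_iff_ne_zero.mpr hA.det_pos.ne')
    rw [this, one_mulVec]
  have hcross : Hᵀ *ᵥ (Q⁻¹ *ᵥ (v - H *ᵥ e)) = SO⁻¹ *ᵥ (e - w) + Sb⁻¹ *ᵥ e := by
    have h1 : Hᵀ *ᵥ (Q⁻¹ *ᵥ (v - H *ᵥ e))
        = Hᵀ *ᵥ (Q⁻¹ *ᵥ v) - (Hᵀ * Q⁻¹ * H) *ᵥ e := by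
      simp [mulVec_sub, mulVec_mulVec, Matrix.mul_assoc]
    have h2 : (Hᵀ * Q⁻¹ * H) *ᵥ e + SO⁻¹ *ᵥ e + Sb⁻¹ *ᵥ e
        = Hᵀ *ᵥ (Q⁻¹ *ᵥ v) + SO⁻¹ *ᵥ w := by
      simpa [hA_def, add_mulVec] using hstat
    rw [h1, mulVec_sub]
    linear_combination -h2
  -- key identity: J x = J μ + ½ dᵀ A d
  have key : ∀ x : Fin n → ℝ,
      J x = J μ + (1 / 2) * ((x - μ) ⬝ᵥ (A *ᵥ (x - μ))) := by
    intro x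
    set d : Fin n → ℝ := x - μ with hd
    have hx1 : x - mub = e + d := by rw [he, hd]; abel
    have hx2 : x - muO = (e - w) + d := by rw [he, hd, hw]; abel
    have hμ2 : μ - muO = e - w := by rw [he, hw]; abel
    have hz : v - H *ᵥ (e + d) = (v - H *ᵥ e) + (-(H *ᵥ d)) := by
      rw [mulVec_add]; abel
    have q1 := quad_expand' Q⁻¹ (hsym hQi) (v - H *ᵥ e) (-(H *ᵥ d))
    have q2 := quad_expand' SO⁻¹ (hsym hSOi) (e - w) d
    have q3 := quad_expand' Sb⁻¹ (hsym hSbi) e d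
    -- rewrite cross terms
    have c1 : (-(H *ᵥ d)) ⬝ᵥ (Q⁻¹ *ᵥ (v - H *ᵥ e))
        = -(d ⬝ᵥ (SO⁻¹ *ᵥ (e - w)) + d ⬝ᵥ (Sb⁻¹ *ᵥ e)) := by
      rw [neg_dotProduct, mulVec_dot', hcross, dotProduct_add]
    have c2 : (-(H *ᵥ d)) ⬝ᵥ (Q⁻¹ *ᵥ (-(H *ᵥ d)))
        = d ⬝ᵥ ((Hᵀ * Q⁻¹ * H) *ᵥ d) := by
      rw [neg_dotProduct, mulVec_neg, dotProduct_neg, neg_neg, mulVec_dot',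
        mulVec_mulVec, mulVec_mulVec]
    have c3 : d ⬝ᵥ (A *ᵥ d)
        = d ⬝ᵥ ((Hᵀ * Q⁻¹ * H) *ᵥ d) + d ⬝ᵥ (SO⁻¹ *ᵥ d) + d ⬝ᵥ (Sb⁻¹ *ᵥ d) := by
      simp [hA_def, add_mulVec, dotProduct_add]
    simp only [J, hx1, hx2, hμ2, ← he, ← hv]
    rw [hz, q1, q2, q3, c1, c2, c3]
    ring
  constructor
  · intro x
    rw [key x]
    rcases eq_or_ne x μ with h | h
    · simp [h]
    · have : (0:ℝ) < (x - μ) ⬝ᵥ (A *ᵥ (x - μ)) := by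
        have := hA.dotProduct_mulVec_pos (x := x - μ) (sub_ne_zero.mpr h)
        simpa using this
      linarith
  · intro x hx
    by_contra h
    have hpos : (0:ℝ) < (x - μ) ⬝ᵥ (A *ᵥ (x - μ)) := by
      have := hA.dotProduct_mulVec_pos (x := x - μ) (sub_ne_zero.mpr h)
      simpa using this
    rw [key x] at hx
    linarith
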